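/- Let p ≥ 3 be a prime and let i be an integer with 1 ≤ i ≤ p-1. Then ∑_{m=1}^{i+p} (-1)^{m-1} (m-1)! · S(i+p, m)_{≤ p-1} ≡ (-1)^{i+1} · p / i (mod p^2), i.e., i · ∑_{m=1}^{i+p} (-1)^{m-1}(m-1)! S(i+p,m)_{≤p-1} ≡ (-1)^{i+1} p (mod p^2). -/

import Mathlib

open Finset

/-- `r`-restricted Stirling number of the second kind: number of partitions of an
`n`-set into `k` nonempty blocks, each of size at most `r`. -/
noncomputable def stirlingRes (n k r : ℕ) : ℕ :=
  Nat.card {P : Finpartition (Finset.univ : Finset (Fin n)) //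
    P.parts.card = k ∧ ∀ b ∈ P.parts, b.card ≤ r}

variable {α β : Type*} [DecidableEq α] [DecidableEq β]

/-- Filtered count of partitions of `s` into `k` parts of size at most `r`. -/
noncomputable def Nc (s : Finset α) (k r : ℕ) : ℕ :=
  #(Finset.univ.filter
      (fun P : Finpartition s => P.parts.card = k ∧ ∀ b ∈ P.parts, b.card ≤ r))

lemma stirlingRes_eq_Nc (n k r : ℕ) :
    stirlingRes n k r = Nc (Finset.univ : Finset (Fin n)) k r := by
  rw [stirlingRes, Nat.card_eq_fintype_card, Fintype.card_subtype, Nc]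
  apply Finset.card_bij' (fun P _ => P) (fun P _ => P) <;>
    simp +contextual [Finset.mem_filter]

/-- Push a finpartition forward along a map injective on `s`. -/
def pushPart (g : α → β) (s : Finset α) (t : Finset β) (hg : Set.InjOn g s)
    (him : s.image g = t) (P : Finpartition s) : Finpartition t where
  parts := P.parts.image (Finset.image g)
  supIndep := by
    rw [Finset.supIndep_iff_pairwiseDisjoint]
    rintro x hx y hy hxy
    simp only [coe_image, Set.mem_image, mem_coe] at hx hy
    obtain ⟨b, hb, rfl⟩ := hx
    obtain ⟨c, hc, rfl⟩ := hy
    have hbc : b ≠ c := fun h => hxy (by rw [h])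
    have hd : Disjoint b c := P.disjoint hb hc hbc
    simp only [id, Finset.disjoint_left]
    rintro z hz hz'
    simp only [Finset.mem_image] at hz hz'
    obtain ⟨u, hu, rfl⟩ := hz
    obtain ⟨v, hv, hvu⟩ := hz'
    have : v = u := hg ((P.le hc) hv) ((P.le hb) hu) hvu
    exact (Finset.disjoint_left.1 hd hu) (this ▸ hv)
  sup_parts := by
    subst him
    ext y
    simp only [Finset.mem_sup, id]
    constructor
    · rintro ⟨c, hc, hy⟩
      obtain ⟨b, hb, rfl⟩ := Finset.mem_image.1 hc
      obtain ⟨x, hx, rfl⟩ := Finset.mem_image.1 hy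
      exact Finset.mem_image_of_mem g ((P.le hb) hx)
    · intro hy
      obtain ⟨x, hx, rfl⟩ := Finset.mem_image.1 hy
      obtain ⟨b, hb, hxb⟩ := P.exists_mem hx
      exact ⟨b.image g, Finset.mem_image_of_mem _ hb, Finset.mem_image_of_mem _ hxb⟩
  bot_notMem := by
    simp only [bot_eq_empty, Finset.mem_image]
    rintro ⟨b, hb, hbe⟩
    exact P.bot_notMem (by rwa [Finset.image_eq_empty.1 hbe] at hb)

lemma pushPart_parts (g : α → β) (s : Finset α) (t : Finset β) (hg : Set.InjOn g s)
    (him : s.image g = t) (P : Finpartition s) :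
    (pushPart g s t hg him P).parts = P.parts.image (Finset.image g) := rfl

/-- Pull a finpartition back along a map injective on `s`. -/
def pullPart (g : α → β) (s : Finset α) (t : Finset β)
    (him : s.image g = t) (Q : Finpartition t) : Finpartition s where
  parts := Q.parts.image (fun b => s.filter (fun x => g x ∈ b))
  supIndep := by
    rw [Finset.supIndep_iff_pairwiseDisjoint]
    rintro x hx y hy hxy
    simp only [coe_image, Set.mem_image, mem_coe] at hx hy
    obtain ⟨b, hb, rfl⟩ := hx
    obtain ⟨c, hc, rfl⟩ := hy
    have hbc : b ≠ c := fun h => hxy (by rw [h])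
    have hd : Disjoint b c := Q.disjoint hb hc hbc
    simp only [id, Finset.disjoint_left, Finset.mem_filter]
    rintro z ⟨hz, hgz⟩ ⟨-, hgz'⟩
    exact (Finset.disjoint_left.1 hd hgz) hgz'
  sup_parts := by
    ext x
    simp only [Finset.mem_sup, id]
    constructor
    · rintro ⟨c, hc, hy⟩
      obtain ⟨b, hb, rfl⟩ := Finset.mem_image.1 hc
      exact (Finset.mem_filter.1 hy).1
    · intro hx
      have hgx : g x ∈ t := him ▸ Finset.mem_image_of_mem g hx
      obtain ⟨b, hb, hgb⟩ := Q.exists_mem hgx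
      exact ⟨_, Finset.mem_image_of_mem _ hb, Finset.mem_filter.2 ⟨hx, hgb⟩⟩
  bot_notMem := by
    simp only [bot_eq_empty, Finset.mem_image]
    rintro ⟨b, hb, hbe⟩
    obtain ⟨y, hy⟩ := Q.nonempty_of_mem_parts hb
    have hyt : y ∈ t := (Q.le hb) hy
    rw [← him] at hyt
    obtain ⟨x, hx, rfl⟩ := Finset.mem_image.1 hyt
    have : x ∈ s.filter (fun x => g x ∈ b) := Finset.mem_filter.2 ⟨hx, hy⟩
    rw [hbe] at this
    exact absurd this (Finset.notMem_empty x)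

lemma pullPart_parts (g : α → β) (s : Finset α) (t : Finset β)
    (him : s.image g = t) (Q : Finpartition t) :
    (pullPart g s t him Q).parts = Q.parts.image (fun b => s.filter (fun x => g x ∈ b)) := rfl

lemma filter_image_eq (g : α → β) (s : Finset α) (hg : Set.InjOn g s) {b : Finset α}
    (hb : b ⊆ s) : s.filter (fun x => g x ∈ b.image g) = b := by
  ext x
  simp only [Finset.mem_filter, Finset.mem_image]
  constructor
  · rintro ⟨hx, y, hy, hxy⟩
    rwa [← hg (hb hy) hx hxy]
  · intro hx
    exact ⟨hb hx, x, hx, rfl⟩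

lemma image_filter_eq (g : α → β) (s : Finset α) (t : Finset β) (him : s.image g = t)
    {b : Finset β} (hb : b ⊆ t) : (s.filter (fun x => g x ∈ b)).image g = b := by
  ext y
  simp only [Finset.mem_image, Finset.mem_filter]
  constructor
  · rintro ⟨x, ⟨hx, hgx⟩, rfl⟩
    exact hgx
  · intro hy
    have := hb hy
    rw [← him] at this
    obtain ⟨x, hx, rfl⟩ := Finset.mem_image.1 this
    exact ⟨x, ⟨hx, hy⟩, rfl⟩

/-- Transfer: the count only depends on the cardinality. -/
lemma Nc_transfer (g : α → β) (s : Finset α) (t : Finset β) (hg : Set.InjOn g s)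
    (him : s.image g = t) (k r : ℕ) : Nc s k r = Nc t k r := by
  classical
  apply Finset.card_bij' (fun P _ => pushPart g s t hg him P) (fun Q _ => pullPart g s t him Q)
  · intro P hP
    simp only [Finset.mem_filter, Finset.mem_univ, true_and] at hP ⊢
    obtain ⟨hcard, hsize⟩ := hP
    constructor
    · rw [pushPart_parts, Finset.card_image_of_injOn, hcard]
      intro b hb c hc hbc
      rw [← filter_image_eq g s hg (P.le hb), ← filter_image_eq g s hg (P.le hc), hbc]
    · intro b hb
      rw [pushPart_parts] at hb
      obtain ⟨c, hc, rfl⟩ := Finset.mem_image.1 hb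
      rw [Finset.card_image_of_injOn (hg.mono (P.le hc))]
      exact hsize c hc
  · intro Q hQ
    simp only [Finset.mem_filter, Finset.mem_univ, true_and] at hQ ⊢
    obtain ⟨hcard, hsize⟩ := hQ
    have key : ∀ b ∈ Q.parts, ((s.filter (fun x => g x ∈ b)).image g) = b :=
      fun b hb => image_filter_eq g s t him (Q.le hb)
    constructor
    · rw [pullPart_parts, Finset.card_image_of_injOn, hcard]
      intro b hb c hc hbc
      rw [← key b hb, ← key c hc]
      exact congrArg (Finset.image g) hbc
    · intro b hb
      rw [pullPart_parts] at hb
      obtain ⟨c, hc, rfl⟩ := Finset.mem_image.1 hb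
      have h2 : ((s.filter (fun x => g x ∈ c)).image g).card
          = (s.filter (fun x => g x ∈ c)).card :=
        Finset.card_image_of_injOn (hg.mono (Finset.filter_subset _ _))
      rw [key c hc] at h2
      exact h2 ▸ hsize c hc
  · intro P hP
    apply Finpartition.ext
    rw [pullPart_parts, pushPart_parts, Finset.image_image]
    calc P.parts.image ((fun b => s.filter (fun x => g x ∈ b)) ∘ Finset.image g)
        = P.parts.image id := Finset.image_congr (fun b hb => filter_image_eq g s hg (P.le hb))
      _ = P.parts := Finset.image_id
  · intro Q hQ
    apply Finpartition.ext
    rw [pushPart_parts, pullPart_parts, Finset.image_image]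
    calc Q.parts.image (Finset.image g ∘ fun b => s.filter (fun x => g x ∈ b))
        = Q.parts.image id :=
          Finset.image_congr (fun b hb => image_filter_eq g s t him (Q.le hb))
      _ = Q.parts := Finset.image_id
section B
variable {α : Type*} [DecidableEq α]

/-- remove a block from a finpartition -/
def delPart {s : Finset α} (P : Finpartition s) {B : Finset α} (hB : B ∈ P.parts) :
    Finpartition (s \ B) where
  parts := P.parts.erase B
  supIndep := P.supIndep.subset (erase_subset _ _)
  sup_parts := by
    have hd : Disjoint B ((P.parts.erase B).sup id) :=
      (Finset.supIndep_iff_disjoint_erase.1 P.supIndep) B hB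
    have h1 : B ∪ (P.parts.erase B).sup id = s := by
      have h2 := P.sup_parts
      rw [← Finset.insert_erase hB, Finset.sup_insert] at h2
      simpa [Finset.sup_eq_union] using h2
    calc (P.parts.erase B).sup id
        = (B ∪ (P.parts.erase B).sup id) \ B := (Finset.union_sdiff_cancel_left hd).symm
      _ = s \ B := by rw [h1]
  bot_notMem h := P.bot_notMem (erase_subset _ _ h)

lemma delPart_parts {s : Finset α} (P : Finpartition s) {B : Finset α} (hB : B ∈ P.parts) :
    (delPart P hB).parts = P.parts.erase B := rfl

/-- add a block to a finpartition of `s \ B` -/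
def extPart {s B : Finset α} (hBs : B ⊆ s) (hne : B.Nonempty) (Q : Finpartition (s \ B)) :
    Finpartition s :=
  Q.extend (by simpa [bot_eq_empty, ← Finset.nonempty_iff_ne_empty] using hne)
    sdiff_disjoint (by rw [sup_eq_union, Finset.sdiff_union_of_subset hBs])

lemma extPart_parts {s B : Finset α} (hBs : B ⊆ s) (hne : B.Nonempty)
    (Q : Finpartition (s \ B)) : (extPart hBs hne Q).parts = insert B Q.parts :=
  Finpartition.extend_parts _ _ _ _

lemma not_mem_parts_of_sdiff {s B : Finset α} (hne : B.Nonempty)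
    (Q : Finpartition (s \ B)) : B ∉ Q.parts := by
  intro h
  obtain ⟨x, hx⟩ := hne
  have := (Q.le h) hx
  exact (Finset.mem_sdiff.1 this).2 hx

/-- The fiber bijection: partitions of `s` with distinguished block `B` correspond to
partitions of `s \\ B`. -/
lemma fiber_card {s B : Finset α} (hBs : B ⊆ s) (hne : B.Nonempty)
    (k r : ℕ) (hBcard : B.card ≤ r) :
    #(Finset.univ.filter (fun P : Finpartition s =>
        (P.parts.card = k + 1 ∧ ∀ b ∈ P.parts, b.card ≤ r) ∧ B ∈ P.parts))
      = Nc (s \ B) k r := by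
  rw [Nc]
  refine Finset.card_bij' (fun P hP => delPart P (Finset.mem_filter.1 hP).2.2)
    (fun Q _ => extPart hBs hne Q) ?_ ?_ ?_ ?_
  · intro P hP
    obtain ⟨-, ⟨hcard, hsize⟩, hBP⟩ := Finset.mem_filter.1 hP
    refine Finset.mem_filter.2 ⟨Finset.mem_univ _, ?_, ?_⟩
    · rw [delPart_parts, Finset.card_erase_of_mem hBP, hcard]
      omega
    · intro b hb
      rw [delPart_parts] at hb
      exact hsize b (Finset.erase_subset _ _ hb)
  · intro Q hQ
    obtain ⟨-, hcard, hsize⟩ := Finset.mem_filter.1 hQ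
    refine Finset.mem_filter.2 ⟨Finset.mem_univ _, ⟨?_, ?_⟩, ?_⟩
    · rw [extPart_parts, Finset.card_insert_of_notMem (not_mem_parts_of_sdiff hne Q), hcard]
    · intro b hb
      rw [extPart_parts] at hb
      rcases Finset.mem_insert.1 hb with rfl | hb'
      · exact hBcard
      · exact hsize b hb'
    · rw [extPart_parts]
      exact Finset.mem_insert_self _ _
  · intro P hP
    obtain ⟨-, -, hBP⟩ := Finset.mem_filter.1 hP
    exact Finpartition.ext (Finset.insert_erase hBP)
  · intro Q hQ
    exact Finpartition.ext (Finset.erase_insert (not_mem_parts_of_sdiff hne Q))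

/-- Recurrence, distinguished element version. -/
lemma Nc_rec_fix {s : Finset α} {a : α} (ha : a ∈ s) (k r : ℕ) :
    Nc s (k + 1) r =
      ∑ B ∈ s.powerset.filter (fun B => a ∈ B ∧ B.card ≤ r), Nc (s \ B) k r := by
  rw [Nc, Finset.card_eq_sum_card_fiberwise
    (f := fun P : Finpartition s => P.part a)
    (t := s.powerset.filter (fun B => a ∈ B ∧ B.card ≤ r)) ?_]
  · apply Finset.sum_congr rfl
    intro B hB
    have hmem := Finset.mem_filter.1 hB
    have hBs : B ⊆ s := Finset.mem_powerset.1 hmem.1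
    have haB : a ∈ B := hmem.2.1
    have hBr : B.card ≤ r := hmem.2.2
    rw [← fiber_card hBs ⟨a, haB⟩ k r hBr, Finset.filter_filter]
    apply Finset.card_nbij' id id
    · intro P hP
      obtain ⟨-, hcond, hpart⟩ := Finset.mem_filter.1 hP
      exact Finset.mem_filter.2 ⟨Finset.mem_univ _, hcond, hpart ▸ (P.part_mem.2 ha)⟩
    · intro P hP
      obtain ⟨-, hcond, hBP⟩ := Finset.mem_filter.1 hP
      exact Finset.mem_filter.2 ⟨Finset.mem_univ _, hcond, P.part_eq_of_mem hBP haB⟩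
    · intro P _; rfl
    · intro P _; rfl
  · intro P hP
    obtain ⟨-, hcard, hsize⟩ := Finset.mem_filter.1 hP
    refine Finset.mem_filter.2 ⟨Finset.mem_powerset.2 (P.le ((P.part_mem.2 ha))), P.mem_part ha,
      hsize _ ((P.part_mem.2 ha))⟩

/-- Recurrence, free block version. -/
lemma Nc_rec_free (s : Finset α) (k r : ℕ) :
    (k + 1) * Nc s (k + 1) r =
      ∑ B ∈ s.powerset.filter (fun B => B.Nonempty ∧ B.card ≤ r), Nc (s \ B) k r := by
  classical
  set W := ((Finset.univ : Finset (Finpartition s)) ×ˢ s.powerset).filter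
    (fun x => (x.1.parts.card = k + 1 ∧ ∀ b ∈ x.1.parts, b.card ≤ r) ∧ x.2 ∈ x.1.parts) with hW
  have count1 : #W = (k + 1) * Nc s (k + 1) r := by
    have hmapsto : ∀ x ∈ W, x.1 ∈ Finset.univ.filter (fun P : Finpartition s =>
        P.parts.card = k + 1 ∧ ∀ b ∈ P.parts, b.card ≤ r) := by
      intro x hx
      obtain ⟨-, hcond, -⟩ := Finset.mem_filter.1 hx
      exact Finset.mem_filter.2 ⟨Finset.mem_univ _, hcond⟩
    rw [Finset.card_eq_sum_card_fiberwise hmapsto]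
    have hfib : ∀ P ∈ Finset.univ.filter (fun P : Finpartition s =>
        P.parts.card = k + 1 ∧ ∀ b ∈ P.parts, b.card ≤ r),
        #(W.filter (fun x => x.1 = P)) = k + 1 := by
      intro P hP
      obtain ⟨-, hcard, hsize⟩ := Finset.mem_filter.1 hP
      have h : #(W.filter (fun x => x.1 = P)) = #P.parts := by
        apply Finset.card_nbij' (fun x => x.2) (fun b => (P, b))
        · intro x hx
          obtain ⟨hx1, hx2⟩ := Finset.mem_filter.1 hx
          obtain ⟨-, -, hmem⟩ := Finset.mem_filter.1 hx1
          exact hx2 ▸ hmem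
        · intro b hb
          refine Finset.mem_filter.2 ⟨Finset.mem_filter.2 ⟨?_, ⟨hcard, hsize⟩, hb⟩, rfl⟩
          exact Finset.mem_product.2 ⟨Finset.mem_univ _, Finset.mem_powerset.2 (P.le hb)⟩
        · rintro ⟨x1, x2⟩ hx
          obtain ⟨-, hx2⟩ := Finset.mem_filter.1 hx
          exact Prod.ext hx2.symm rfl
        · intro b _; rfl
      rw [h, hcard]
    rw [Finset.sum_congr rfl hfib, Finset.sum_const, smul_eq_mul, Nc, Nat.mul_comm]
  have count2 : #W = ∑ B ∈ s.powerset.filter (fun B => B.Nonempty ∧ B.card ≤ r),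
      Nc (s \ B) k r := by
    rw [Finset.card_eq_sum_card_fiberwise (f := fun x : Finpartition s × Finset α => x.2)
      (t := s.powerset.filter (fun B => B.Nonempty ∧ B.card ≤ r)) ?_]
    · apply Finset.sum_congr rfl
      intro B hB
      have hmem := Finset.mem_filter.1 hB
      have hBs : B ⊆ s := Finset.mem_powerset.1 hmem.1
      have hne : B.Nonempty := hmem.2.1
      have hBr : B.card ≤ r := hmem.2.2
      rw [← fiber_card hBs hne k r hBr]
      apply Finset.card_nbij' (fun x => x.1) (fun P => (P, B))
      · intro x hx
        obtain ⟨hx1, hx2⟩ := Finset.mem_filter.1 hx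
        obtain ⟨-, hcond, hmem⟩ := Finset.mem_filter.1 hx1
        exact Finset.mem_filter.2 ⟨Finset.mem_univ _, hcond, hx2 ▸ hmem⟩
      · intro P hP
        obtain ⟨-, hcond, hmem⟩ := Finset.mem_filter.1 hP
        refine Finset.mem_filter.2 ⟨Finset.mem_filter.2 ⟨?_, hcond, hmem⟩, rfl⟩
        exact Finset.mem_product.2 ⟨Finset.mem_univ _, Finset.mem_powerset.2 (P.le hmem)⟩
      · rintro ⟨x1, x2⟩ hx
        obtain ⟨-, hx2⟩ := Finset.mem_filter.1 hx
        exact Prod.ext rfl hx2.symm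
      · intro P _; rfl
    · intro x hx
      obtain ⟨hx1, hcond, hmem⟩ := Finset.mem_filter.1 hx
      have hx2 := (Finset.mem_product.1 hx1).2
      refine Finset.mem_filter.2 ⟨hx2, x.1.nonempty_of_mem_parts hmem, hcond.2 _ hmem⟩
  rw [← count1, count2]

end B
section C

lemma Nc_eq_stirlingRes {N : ℕ} (s : Finset (Fin N)) (k r : ℕ) :
    Nc s k r = stirlingRes s.card k r := by
  rw [stirlingRes_eq_Nc]
  refine (Nc_transfer (fun x : Fin s.card => ((s.orderIsoOfFin rfl x : {y // y ∈ s}) : Fin N))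
    Finset.univ s ?_ ?_ k r).symm
  · intro x _ y _ hxy
    exact (s.orderIsoOfFin rfl).injective (Subtype.ext hxy)
  · ext y
    simp only [Finset.mem_image, Finset.mem_univ, true_and]
    constructor
    · rintro ⟨x, rfl⟩
      exact (s.orderIsoOfFin rfl x).2
    · intro hy
      exact ⟨(s.orderIsoOfFin rfl).symm ⟨y, hy⟩, by simp⟩

lemma stirlingRes_eq_zero_of_lt {n k r : ℕ} (h : n < k) : stirlingRes n k r = 0 := by
  rw [stirlingRes]
  haveI : IsEmpty {P : Finpartition (Finset.univ : Finset (Fin n)) //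
      P.parts.card = k ∧ ∀ b ∈ P.parts, b.card ≤ r} := by
    refine ⟨fun ⟨P, hP⟩ => ?_⟩
    obtain ⟨hcard, -⟩ := hP
    have := P.card_parts_le_card
    rw [hcard, Finset.card_univ, Fintype.card_fin] at this
    omega
  exact Nat.card_of_isEmpty

lemma stirlingRes_zero_zero (r : ℕ) : stirlingRes 0 0 r = 1 := by
  rw [stirlingRes]
  have huniv : (Finset.univ : Finset (Fin 0)) = (∅ : Finset (Fin 0)) := rfl
  have hparts : ∀ P : Finpartition (Finset.univ : Finset (Fin 0)), P.parts = ∅ := fun P =>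
    Finpartition.parts_eq_empty_iff.2 huniv
  haveI : Unique {P : Finpartition (Finset.univ : Finset (Fin 0)) //
      P.parts.card = 0 ∧ ∀ b ∈ P.parts, b.card ≤ r} := by
    refine ⟨⟨⟨(Finpartition.empty (Finset (Fin 0))).copy huniv.symm, ?_, ?_⟩⟩, ?_⟩
    · rw [hparts]; rfl
    · intro b hb
      rw [hparts] at hb
      exact absurd hb (Finset.notMem_empty b)
    · rintro ⟨P, -⟩
      exact Subtype.ext (Finpartition.ext (by rw [hparts, hparts]))
  exact Nat.card_unique

lemma stirlingRes_zero_of_pos {n r : ℕ} (hn : 1 ≤ n) : stirlingRes n 0 r = 0 := by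
  rw [stirlingRes]
  haveI : IsEmpty {P : Finpartition (Finset.univ : Finset (Fin n)) //
      P.parts.card = 0 ∧ ∀ b ∈ P.parts, b.card ≤ r} := by
    refine ⟨fun ⟨P, hP⟩ => ?_⟩
    obtain ⟨hcard, -⟩ := hP
    have h1 := Finpartition.parts_eq_empty_iff.1 (Finset.card_eq_zero.1 hcard)
    have h2 : IsEmpty (Fin n) := Finset.univ_eq_empty_iff.1 h1
    exact absurd (h2.elim ⟨0, by omega⟩) (fun x => x)
  exact Nat.card_of_isEmpty

/-- distinguished-element recurrence for restricted Stirling numbers -/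
lemma stirlingRes_rec_fix (n k r : ℕ) :
    stirlingRes (n + 1) (k + 1) r
      = ∑ j ∈ Finset.Icc 1 r, n.choose (j - 1) * stirlingRes (n + 1 - j) k r := by
  have : NeZero (n + 1) := ⟨by omega⟩
  rw [stirlingRes_eq_Nc, Nc_rec_fix (a := (0 : Fin (n + 1))) (Finset.mem_univ _) k r]
  have step1 : ∀ B ∈ (Finset.univ : Finset (Fin (n+1))).powerset.filter
      (fun B => (0 : Fin (n+1)) ∈ B ∧ B.card ≤ r),
      Nc ((Finset.univ : Finset (Fin (n+1))) \ B) k r = stirlingRes (n + 1 - B.card) k r := by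
    intro B _
    rw [Nc_eq_stirlingRes, Finset.card_sdiff_of_subset (Finset.subset_univ B), Finset.card_univ,
      Fintype.card_fin]
  rw [Finset.sum_congr rfl step1]
  rw [← Finset.sum_fiberwise_of_maps_to (g := Finset.card) (t := Finset.Icc 1 r) ?_]
  · apply Finset.sum_congr rfl
    intro j hj
    obtain ⟨hj1, hjr⟩ := Finset.mem_Icc.1 hj
    rw [Finset.sum_congr rfl (fun B hB => by rw [(Finset.mem_filter.1 hB).2]),
      Finset.sum_const, smul_eq_mul]
    congr 1
    have : #(((Finset.univ : Finset (Fin (n+1))).erase 0).powersetCard (j-1))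
        = n.choose (j - 1) := by
      rw [Finset.card_powersetCard, Finset.card_erase_of_mem (Finset.mem_univ _),
        Finset.card_univ, Fintype.card_fin, Nat.add_sub_cancel]
    rw [← this]
    apply Finset.card_nbij' (fun B => B.erase 0) (fun C => insert 0 C)
    · intro B hB
      obtain ⟨hB1, hBj⟩ := Finset.mem_filter.1 hB
      obtain ⟨-, h0B, -⟩ := Finset.mem_filter.1 hB1
      refine Finset.mem_powersetCard.2 ⟨Finset.erase_subset_erase _ (Finset.subset_univ B), ?_⟩
      rw [Finset.card_erase_of_mem h0B, hBj]
    · intro C hC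
      obtain ⟨hC1, hC2⟩ := Finset.mem_powersetCard.1 hC
      have h0C : (0 : Fin (n+1)) ∉ C := fun h => by
        have := hC1 h
        simp at this
      have hcard : (insert (0 : Fin (n+1)) C).card = j := by
        rw [Finset.card_insert_of_notMem h0C, hC2]
        omega
      refine Finset.mem_filter.2 ⟨Finset.mem_filter.2 ⟨Finset.mem_powerset.2
        (Finset.subset_univ _), Finset.mem_insert_self _ _, by beta_reduce; omega⟩, hcard⟩
    · intro B hB
      obtain ⟨hB1, -⟩ := Finset.mem_filter.1 hB
      obtain ⟨-, h0B, -⟩ := Finset.mem_filter.1 hB1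
      exact Finset.insert_erase h0B
    · intro C hC
      obtain ⟨hC1, -⟩ := Finset.mem_powersetCard.1 hC
      exact Finset.erase_insert (fun h => by have := hC1 h; simp at this)
  · intro B hB
    obtain ⟨-, h0B, hBr⟩ := Finset.mem_filter.1 hB
    exact Finset.mem_Icc.2 ⟨Finset.card_pos.2 ⟨0, h0B⟩, hBr⟩

/-- free-block recurrence for restricted Stirling numbers -/
lemma stirlingRes_rec_free (n k r : ℕ) :
    (k + 1) * stirlingRes n (k + 1) r
      = ∑ j ∈ Finset.Icc 1 r, n.choose j * stirlingRes (n - j) k r := by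
  rw [stirlingRes_eq_Nc]
  have huc : (Finset.univ : Finset (Fin n)).card = n := by
    rw [Finset.card_univ, Fintype.card_fin]
  rw [Nc_rec_free]
  have step1 : ∀ B ∈ (Finset.univ : Finset (Fin n)).powerset.filter
      (fun B => B.Nonempty ∧ B.card ≤ r),
      Nc ((Finset.univ : Finset (Fin n)) \ B) k r
        = stirlingRes (n - B.card) k r := by
    intro B _
    rw [Nc_eq_stirlingRes, Finset.card_sdiff_of_subset (Finset.subset_univ B), huc]
  rw [Finset.sum_congr rfl step1]
  rw [← Finset.sum_fiberwise_of_maps_to (g := Finset.card) (t := Finset.Icc 1 r) ?_]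
  · apply Finset.sum_congr rfl
    intro j hj
    obtain ⟨hj1, hjr⟩ := Finset.mem_Icc.1 hj
    rw [Finset.sum_congr rfl (fun B hB => by rw [(Finset.mem_filter.1 hB).2]),
      Finset.sum_const, smul_eq_mul]
    congr 1
    have : #((Finset.univ : Finset (Fin n)).powersetCard j) = n.choose j := by
      rw [Finset.card_powersetCard, huc]
    rw [← this]
    apply Finset.card_nbij' id id
    · intro B hB
      obtain ⟨hB1, hBj⟩ := Finset.mem_filter.1 hB
      exact Finset.mem_powersetCard.2 ⟨Finset.subset_univ _, hBj⟩
    · intro C hC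
      obtain ⟨hC1, hC2⟩ := Finset.mem_powersetCard.1 hC
      simp only [id_eq]
      refine Finset.mem_filter.2 ⟨Finset.mem_filter.2 ⟨Finset.mem_powerset.2
        (Finset.subset_univ _), Finset.card_pos.1 (by rw [hC2]; omega),
        by rw [hC2]; exact hjr⟩, hC2⟩
    · intro B _; rfl
    · intro C _; rfl
  · intro B hB
    obtain ⟨-, hne, hBr⟩ := Finset.mem_filter.1 hB
    exact Finset.mem_Icc.2 ⟨Finset.card_pos.2 hne, hBr⟩

end C
section D

/-- signed ordered-partition sum -/
noncomputable def Msum (r n : ℕ) : ℤ :=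
  ∑ m ∈ Finset.range (n + 1), (-1 : ℤ) ^ m * (Nat.factorial m) * stirlingRes n m r

lemma Msum_zero (r : ℕ) : Msum r 0 = 1 := by
  simp [Msum, stirlingRes_zero_zero]

lemma Msum_eq_extended {r t n : ℕ} (h : t ≤ n) :
    Msum r t = ∑ m ∈ Finset.range (n + 1),
      (-1 : ℤ) ^ m * (Nat.factorial m) * stirlingRes t m r := by
  rw [Msum]
  apply Finset.sum_subset (Finset.range_subset_range.2 (by omega))
  intro m hm hnm
  rw [Finset.mem_range] at hm hnm
  rw [stirlingRes_eq_zero_of_lt (show t < m by omega)]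
  simp

lemma Msum_rec {r n : ℕ} (hn : 1 ≤ n) :
    Msum r n = -∑ j ∈ Finset.Icc 1 r, (n.choose j : ℤ) * Msum r (n - j) := by
  have key : ∀ j ∈ Finset.Icc 1 r, (n.choose j : ℤ) * Msum r (n - j)
      = ∑ m ∈ Finset.range (n + 1),
          (n.choose j : ℤ) * ((-1) ^ m * (Nat.factorial m) * stirlingRes (n - j) m r) := by
    intro j hj
    rw [Msum_eq_extended (show n - j ≤ n by omega), Finset.mul_sum]
  rw [Finset.sum_congr rfl key, Finset.sum_comm]
  have inner : ∀ m ∈ Finset.range (n + 1),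
      ∑ j ∈ Finset.Icc 1 r, (n.choose j : ℤ) * ((-1) ^ m * (Nat.factorial m)
          * stirlingRes (n - j) m r)
      = -((-1 : ℤ) ^ (m + 1) * (Nat.factorial (m + 1)) * stirlingRes n (m + 1) r) := by
    intro m _
    have h := stirlingRes_rec_free n m r
    calc ∑ j ∈ Finset.Icc 1 r, (n.choose j : ℤ) * ((-1) ^ m * (Nat.factorial m)
            * stirlingRes (n - j) m r)
        = (-1 : ℤ) ^ m * (Nat.factorial m)
            * ((∑ j ∈ Finset.Icc 1 r, n.choose j * stirlingRes (n - j) m r : ℕ) : ℤ) := by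
          push_cast
          rw [Finset.mul_sum]
          apply Finset.sum_congr rfl
          intros; ring
      _ = (-1 : ℤ) ^ m * (Nat.factorial m) * (((m + 1) * stirlingRes n (m + 1) r : ℕ) : ℤ) := by
          rw [← h]
      _ = -((-1 : ℤ) ^ (m + 1) * (Nat.factorial (m + 1)) * stirlingRes n (m + 1) r) := by
          rw [Nat.factorial_succ]
          push_cast
          ring
  rw [Finset.sum_congr rfl inner]
  simp only [Finset.sum_neg_distrib, neg_neg]
  -- goal : Msum r n = ∑ m ∈ range (n+1), (-1)^(m+1) (m+1)! S n (m+1)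
  have shift := Finset.sum_range_succ'
    (fun m => (-1 : ℤ) ^ m * (Nat.factorial m) * stirlingRes n m r) (n + 1)
  have hf0 : (-1 : ℤ) ^ 0 * (Nat.factorial 0) * stirlingRes n 0 r = 0 := by
    rw [stirlingRes_zero_of_pos hn]; simp
  have hftop : (-1 : ℤ) ^ (n + 1) * (Nat.factorial (n + 1)) * stirlingRes n (n + 1) r = 0 := by
    rw [stirlingRes_eq_zero_of_lt (by omega)]; simp
  have hfull : ∑ m ∈ Finset.range (n + 2),
      (-1 : ℤ) ^ m * (Nat.factorial m) * stirlingRes n m r = Msum r n := by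
    rw [Finset.sum_range_succ, hftop, add_zero, Msum]
  rw [hfull, hf0, add_zero] at shift
  exact shift

/-- The theorem's sum in terms of `Msum`. -/
lemma Asum_eq (r n : ℕ) :
    ∑ m ∈ Finset.Icc 1 (n + 1),
        (-1 : ℤ) ^ (m - 1) * (Nat.factorial (m - 1)) * stirlingRes (n + 1) m r
      = ∑ j ∈ Finset.Icc 1 r, (n.choose (j - 1) : ℤ) * Msum r (n + 1 - j) := by
  rw [← Finset.Ico_add_one_right_eq_Icc, Finset.sum_Ico_eq_sum_range]
  simp only [Nat.add_sub_cancel_left, Nat.add_sub_cancel]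
  -- ∑ i ∈ range (n+1), (-1)^i * i! * S (n+1) (1+i)
  have step : ∀ i ∈ Finset.range (n + 1),
      (-1 : ℤ) ^ i * (Nat.factorial i) * stirlingRes (n + 1) (1 + i) r
      = ∑ j ∈ Finset.Icc 1 r, (n.choose (j - 1) : ℤ)
          * ((-1) ^ i * (Nat.factorial i) * stirlingRes (n + 1 - j) i r) := by
    intro i _
    have h := stirlingRes_rec_fix n i r
    rw [show 1 + i = i + 1 by omega, h]
    push_cast
    rw [Finset.mul_sum]
    apply Finset.sum_congr rfl
    intros; ring
  rw [Finset.sum_congr rfl step, Finset.sum_comm]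
  apply Finset.sum_congr rfl
  intro j hj
  have hj1 := (Finset.mem_Icc.1 hj).1
  rw [Msum_eq_extended (show n + 1 - j ≤ n by omega), Finset.mul_sum]

end D
section E

/-- partial alternating binomial sum, shifted form -/
lemma alt_partial (m : ℕ) (hm : 1 ≤ m) (q : ℕ) :
    ∑ k ∈ Finset.range q, (-1 : ℤ) ^ (k + 1) * (m.choose (k + 1))
      = (-1) ^ q * ((m - 1).choose q) - 1 := by
  induction q with
  | zero => simp
  | succ q ih =>
    rw [Finset.sum_range_succ, ih]
    have hp : (m.choose (q + 1) : ℤ) = (m - 1).choose q + (m - 1).choose (q + 1) := by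
      have h2 := Nat.choose_succ_succ' (m - 1) q
      rw [Nat.sub_add_cancel hm] at h2
      exact_mod_cast h2
    rw [hp, pow_succ]
    ring

lemma alt_partial0 (m : ℕ) (hm : 1 ≤ m) (q : ℕ) :
    ∑ k ∈ Finset.range (q + 1), (-1 : ℤ) ^ k * (m.choose k)
      = (-1) ^ q * ((m - 1).choose q) := by
  rw [Finset.sum_range_succ' (fun k => (-1 : ℤ) ^ k * (m.choose k)) q]
  simp only [pow_zero, one_mul, Nat.choose_zero_right, Nat.cast_one]
  rw [alt_partial m hm q]
  ring

lemma binom_neg_two (t : ℕ) :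
    ∑ k ∈ Finset.range (t + 1), ((t.choose k : ℤ)) * (-2) ^ k = (-1) ^ t := by
  have h := add_pow (-2 : ℤ) 1 t
  simp only [one_pow, mul_one] at h
  rw [show (-2 : ℤ) + 1 = -1 by norm_num] at h
  rw [h]
  apply Finset.sum_congr rfl
  intros; ring

/-- the closed-form candidate -/
noncomputable def Fc (p m : ℕ) : ℤ :=
  (-1) ^ m + ∑ k ∈ Finset.range (m + 1 - p), (-2 : ℤ) ^ k * (m.choose k)

/-- the key double-sum swap -/
lemma swap_sum (p m u : ℕ) (hu : u + 1 ≤ p - 1) (hum : u ≤ m) (hmp : m + 1 - p = u + 1)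
    (hpm : p ≤ m) :
    ∑ j ∈ Finset.Icc 1 (p - 1), (m.choose j : ℤ)
        * ∑ k ∈ Finset.range (m - j + 1 - p), (-2 : ℤ) ^ k * ((m - j).choose k)
      = ∑ t ∈ Finset.range u, (m.choose (t + 1) : ℤ) * ((-1) ^ (t + 1) - (-2) ^ (t + 1)) := by
  have e1 : ∀ j ∈ Finset.Icc 1 (p - 1), (m.choose j : ℤ)
        * ∑ k ∈ Finset.range (m - j + 1 - p), (-2 : ℤ) ^ k * ((m - j).choose k)
      = ∑ k ∈ Finset.range (u + 1 - j),
          (m.choose j : ℤ) * ((m - j).choose k) * (-2) ^ k := by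
    intro j hj
    obtain ⟨hj1, hj2⟩ := Finset.mem_Icc.1 hj
    have : m - j + 1 - p = u + 1 - j := by omega
    rw [this, Finset.mul_sum]
    apply Finset.sum_congr rfl
    intros; ring
  rw [Finset.sum_congr rfl e1]
  have e2 : ∀ t ∈ Finset.range u, (m.choose (t + 1) : ℤ) * ((-1) ^ (t + 1) - (-2) ^ (t + 1))
      = ∑ k ∈ Finset.range (t + 1),
          (m.choose (t + 1) : ℤ) * ((t + 1).choose k) * (-2) ^ k := by
    intro t _
    have hb := binom_neg_two (t + 1)
    rw [Finset.sum_range_succ, Nat.choose_self] at hb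
    have : (∑ k ∈ Finset.range (t + 1), (((t + 1).choose k : ℤ)) * (-2) ^ k)
        = (-1) ^ (t + 1) - (-2) ^ (t + 1) := by
      push_cast at hb ⊢
      linarith [hb]
    rw [← this, Finset.mul_sum]
    apply Finset.sum_congr rfl
    intros; ring
  rw [Finset.sum_congr rfl e2]
  rw [Finset.sum_sigma' (Finset.Icc 1 (p - 1)) (fun j => Finset.range (u + 1 - j))
    (fun j k => (m.choose j : ℤ) * ((m - j).choose k) * (-2) ^ k)]
  rw [Finset.sum_sigma' (Finset.range u) (fun t => Finset.range (t + 1))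
    (fun t k => (m.choose (t + 1) : ℤ) * ((t + 1).choose k) * (-2) ^ k)]
  apply Finset.sum_nbij' (fun x => ⟨x.1 + x.2 - 1, x.2⟩) (fun x => ⟨x.1 + 1 - x.2, x.2⟩)
  · rintro ⟨j, k⟩ hx
    have hj1 : 1 ≤ j := (Finset.mem_Icc.1 (Finset.mem_sigma.1 hx).1).1
    have hj2 : j ≤ p - 1 := (Finset.mem_Icc.1 (Finset.mem_sigma.1 hx).1).2
    have hk : k < u + 1 - j := Finset.mem_range.1 (Finset.mem_sigma.1 hx).2
    have h1 : j + k - 1 < u := by omega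
    have h2 : k < j + k - 1 + 1 := by omega
    exact Finset.mem_sigma.2 ⟨Finset.mem_range.2 h1, Finset.mem_range.2 h2⟩
  · rintro ⟨t, k⟩ hx
    have ht : t < u := Finset.mem_range.1 (Finset.mem_sigma.1 hx).1
    have hk : k < t + 1 := Finset.mem_range.1 (Finset.mem_sigma.1 hx).2
    have h1 : 1 ≤ t + 1 - k ∧ t + 1 - k ≤ p - 1 := by omega
    have h2 : k < u + 1 - (t + 1 - k) := by omega
    exact Finset.mem_sigma.2 ⟨Finset.mem_Icc.2 h1, Finset.mem_range.2 h2⟩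
  · rintro ⟨j, k⟩ hx
    have hj1 : 1 ≤ j := (Finset.mem_Icc.1 (Finset.mem_sigma.1 hx).1).1
    have hj2 : j ≤ p - 1 := (Finset.mem_Icc.1 (Finset.mem_sigma.1 hx).1).2
    have hk : k < u + 1 - j := Finset.mem_range.1 (Finset.mem_sigma.1 hx).2
    dsimp only
    simp only [Sigma.mk.inj_iff, heq_eq_eq]
    refine ⟨by omega, ?_⟩
    try rfl
    try trivial
  · rintro ⟨t, k⟩ hx
    have ht : t < u := Finset.mem_range.1 (Finset.mem_sigma.1 hx).1
    have hk : k < t + 1 := Finset.mem_range.1 (Finset.mem_sigma.1 hx).2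
    dsimp only
    simp only [Sigma.mk.inj_iff, heq_eq_eq]
    refine ⟨by omega, ?_⟩
    try rfl
    try trivial
  · rintro ⟨j, k⟩ hx
    have hj1 : 1 ≤ j := (Finset.mem_Icc.1 (Finset.mem_sigma.1 hx).1).1
    have hj2 : j ≤ p - 1 := (Finset.mem_Icc.1 (Finset.mem_sigma.1 hx).1).2
    have hk : k < u + 1 - j := Finset.mem_range.1 (Finset.mem_sigma.1 hx).2
    dsimp only
    have ht1 : j + k - 1 + 1 = j + k := by omega
    rw [ht1]
    have hc : m.choose (j + k) * ((j + k).choose k) = m.choose j * ((m - j).choose k) := by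
      have h1 : (j + k).choose k = (j + k).choose j := by
        rw [← Nat.choose_symm (show j ≤ j + k by omega)]
        congr 1
        omega
      rw [h1]
      have h2 := Nat.choose_mul (n := m) (k := j + k) (s := j) (by omega)
      rw [Nat.add_sub_cancel_left] at h2
      exact h2
    calc (m.choose j : ℤ) * ((m - j).choose k) * (-2) ^ k
        = ((m.choose j * ((m - j).choose k) : ℕ) : ℤ) * (-2) ^ k := by push_cast; ring
      _ = ((m.choose (j + k) * ((j + k).choose k) : ℕ) : ℤ) * (-2) ^ k := by rw [hc]
      _ = (m.choose (j + k) : ℤ) * (((j + k).choose k)) * (-2) ^ k := by push_cast; ring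

lemma range_shift_sum (u : ℕ) (g : ℕ → ℤ) :
    ∑ k ∈ Finset.range (u + 1), g k = (∑ t ∈ Finset.range u, g (t + 1)) + g 0 :=
  Finset.sum_range_succ' g u

/-- Closed form for Msum: valid for `m ≤ 2p - 2`, `p` odd. -/
lemma Msum_closed {p : ℕ} (hodd : Odd p) (hp1 : 1 ≤ p) :
    ∀ m, m ≤ 2 * p - 2 → Msum (p - 1) m = Fc p m := by
  intro m
  induction m using Nat.strong_induction_on with
  | _ m ih =>
    intro hm
    rcases Nat.eq_zero_or_pos m with rfl | hm1
    · rw [Msum_zero, Fc]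
      have : 0 + 1 - p = 0 := by omega
      rw [this]
      simp
    · rw [Msum_rec hm1]
      have hF : ∀ j ∈ Finset.Icc 1 (p - 1), ((m.choose j : ℤ)) * Msum (p - 1) (m - j)
          = (m.choose j : ℤ) * ((-1) ^ (m - j)
            + ∑ k ∈ Finset.range (m - j + 1 - p), (-2 : ℤ) ^ k * ((m - j).choose k)) := by
        intro j hj
        obtain ⟨hj1, hj2⟩ := Finset.mem_Icc.1 hj
        rw [ih (m - j) (by omega) (by omega), Fc]
      rw [Finset.sum_congr rfl hF]
      simp only [mul_add]
      rw [Finset.sum_add_distrib, neg_add]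
      -- Term 1
      have hT1 : -∑ j ∈ Finset.Icc 1 (p - 1), (m.choose j : ℤ) * (-1) ^ (m - j)
          = (-1) ^ m - (-1) ^ m * ((m - 1).choose (p - 1)) := by
        have e : ∀ j ∈ Finset.Icc 1 (p - 1), (m.choose j : ℤ) * (-1) ^ (m - j)
            = (-1) ^ m * ((-1) ^ j * (m.choose j)) := by
          intro j hj
          obtain ⟨hj1, hj2⟩ := Finset.mem_Icc.1 hj
          rcases le_or_gt j m with h | h
          · have hpow : (-1 : ℤ) ^ m * (-1) ^ j = (-1) ^ (m - j) := by
              rw [← pow_add, show m + j = (m - j) + 2 * j by omega, pow_add, pow_mul]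
              norm_num
            rw [← hpow]; ring
          · rw [Nat.choose_eq_zero_of_lt h]
            simp
        rw [Finset.sum_congr rfl e, ← Finset.mul_sum]
        have hIcc : Finset.Icc 1 (p - 1) = Finset.Ico 1 p := by
          rw [← Finset.Ico_add_one_right_eq_Icc]
          congr 1
          omega
        rw [hIcc, Finset.sum_Ico_eq_sum_range]
        have e2 : ∀ k ∈ Finset.range (p - 1), (-1 : ℤ) ^ (1 + k) * (m.choose (1 + k))
            = (-1) ^ (k + 1) * (m.choose (k + 1)) := by
          intro k _
          rw [Nat.add_comm 1 k]
        rw [Finset.sum_congr rfl e2, alt_partial m hm1 (p - 1)]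
        have : (-1 : ℤ) ^ (p - 1) = 1 := Even.neg_one_pow (by
          rcases hodd with ⟨c, hc⟩
          exact ⟨c, by omega⟩)
        rw [this]
        ring
      rw [hT1]
      -- Term 2: split on whether m ≤ p - 1
      rcases lt_or_ge m p with hcase | hcase
      · -- all inner sums empty, and (m-1).choose (p-1) = 0
        have hz : ∀ j ∈ Finset.Icc 1 (p - 1), (m.choose j : ℤ)
            * ∑ k ∈ Finset.range (m - j + 1 - p), (-2 : ℤ) ^ k * ((m - j).choose k) = 0 := by
          intro j hj
          obtain ⟨hj1, hj2⟩ := Finset.mem_Icc.1 hj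
          have : m - j + 1 - p = 0 := by omega
          rw [this]
          simp
        rw [Finset.sum_eq_zero hz]
        have hch : (m - 1).choose (p - 1) = 0 := Nat.choose_eq_zero_of_lt (by omega)
        rw [hch, Fc]
        have : m + 1 - p = 0 := by omega
        rw [this]
        simp
      · -- p ≤ m ≤ 2p - 2
        set u := m - p with hu
        have hswap := swap_sum p m u (by omega) (by omega) (by omega) hcase
        rw [hswap]
        have hsplit : ∀ t ∈ Finset.range u, (m.choose (t + 1) : ℤ)
              * ((-1) ^ (t + 1) - (-2) ^ (t + 1))
            = (-1) ^ (t + 1) * (m.choose (t + 1)) - (-2) ^ (t + 1) * (m.choose (t + 1)) := by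
          intros; ring
        rw [Finset.sum_congr rfl hsplit, Finset.sum_sub_distrib]
        rw [alt_partial m hm1 u]
        have hG : ∑ t ∈ Finset.range u, (-2 : ℤ) ^ (t + 1) * (m.choose (t + 1))
            = (∑ k ∈ Finset.range (m + 1 - p), (-2 : ℤ) ^ k * (m.choose k)) - 1 := by
          have : m + 1 - p = u + 1 := by omega
          rw [this, range_shift_sum u (fun k => (-2 : ℤ) ^ k * (m.choose k))]
          simp
        rw [hG, Fc]
        have hsymm : (m - 1).choose u = (m - 1).choose (p - 1) := by
          rw [← Nat.choose_symm (show p - 1 ≤ m - 1 by omega)]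
          congr 1
          omega
        have hsign : (-1 : ℤ) ^ u = -(-1 : ℤ) ^ m := by
          have h1 : (-1 : ℤ) ^ u * (-1) ^ p = (-1) ^ m := by
            rw [← pow_add]
            congr 1
            omega
          have h2 : (-1 : ℤ) ^ p = -1 := Odd.neg_one_pow hodd
          rw [h2] at h1
          linarith
        rw [hsymm, hsign]
        ring

end E
section F

lemma swap_sum2 (p n i : ℕ) (hi1 : 1 ≤ i) (hip : i ≤ p - 1) (hn : n + 1 = i + p)
    (hp3 : 3 ≤ p) :
    ∑ j ∈ Finset.Icc 1 (p - 1), (n.choose (j - 1) : ℤ)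
        * ∑ k ∈ Finset.range (n + 1 - j + 1 - p), (-2 : ℤ) ^ k * ((n + 1 - j).choose k)
      = ∑ t ∈ Finset.range i, (n.choose t : ℤ) * (-1) ^ t := by
  have e1 : ∀ j ∈ Finset.Icc 1 (p - 1), (n.choose (j - 1) : ℤ)
        * ∑ k ∈ Finset.range (n + 1 - j + 1 - p), (-2 : ℤ) ^ k * ((n + 1 - j).choose k)
      = ∑ k ∈ Finset.range (i + 1 - j),
          (n.choose (j - 1) : ℤ) * ((n + 1 - j).choose k) * (-2) ^ k := by
    intro j hj
    obtain ⟨hj1, hj2⟩ := Finset.mem_Icc.1 hj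
    have : n + 1 - j + 1 - p = i + 1 - j := by omega
    rw [this, Finset.mul_sum]
    apply Finset.sum_congr rfl
    intros; ring
  rw [Finset.sum_congr rfl e1]
  have e2 : ∀ t ∈ Finset.range i, (n.choose t : ℤ) * (-1) ^ t
      = ∑ k ∈ Finset.range (t + 1), (n.choose t : ℤ) * (t.choose k) * (-2) ^ k := by
    intro t _
    rw [← binom_neg_two t, Finset.mul_sum]
    apply Finset.sum_congr rfl
    intros; ring
  rw [Finset.sum_congr rfl e2]
  rw [Finset.sum_sigma' (Finset.Icc 1 (p - 1)) (fun j => Finset.range (i + 1 - j))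
    (fun j k => (n.choose (j - 1) : ℤ) * ((n + 1 - j).choose k) * (-2) ^ k)]
  rw [Finset.sum_sigma' (Finset.range i) (fun t => Finset.range (t + 1))
    (fun t k => (n.choose t : ℤ) * (t.choose k) * (-2) ^ k)]
  apply Finset.sum_nbij' (fun x => ⟨x.1 - 1 + x.2, x.2⟩) (fun x => ⟨x.1 + 1 - x.2, x.2⟩)
  · rintro ⟨j, k⟩ hx
    have hj1 : 1 ≤ j := (Finset.mem_Icc.1 (Finset.mem_sigma.1 hx).1).1
    have hj2 : j ≤ p - 1 := (Finset.mem_Icc.1 (Finset.mem_sigma.1 hx).1).2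
    have hk : k < i + 1 - j := Finset.mem_range.1 (Finset.mem_sigma.1 hx).2
    have h1 : j - 1 + k < i := by omega
    have h2 : k < j - 1 + k + 1 := by omega
    exact Finset.mem_sigma.2 ⟨Finset.mem_range.2 h1, Finset.mem_range.2 h2⟩
  · rintro ⟨t, k⟩ hx
    have ht : t < i := Finset.mem_range.1 (Finset.mem_sigma.1 hx).1
    have hk : k < t + 1 := Finset.mem_range.1 (Finset.mem_sigma.1 hx).2
    have h1 : 1 ≤ t + 1 - k ∧ t + 1 - k ≤ p - 1 := by omega
    have h2 : k < i + 1 - (t + 1 - k) := by omega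
    exact Finset.mem_sigma.2 ⟨Finset.mem_Icc.2 h1, Finset.mem_range.2 h2⟩
  · rintro ⟨j, k⟩ hx
    have hj1 : 1 ≤ j := (Finset.mem_Icc.1 (Finset.mem_sigma.1 hx).1).1
    have hj2 : j ≤ p - 1 := (Finset.mem_Icc.1 (Finset.mem_sigma.1 hx).1).2
    have hk : k < i + 1 - j := Finset.mem_range.1 (Finset.mem_sigma.1 hx).2
    dsimp only
    simp only [Sigma.mk.inj_iff, heq_eq_eq]
    refine ⟨by omega, ?_⟩
    try rfl
    try trivial
  · rintro ⟨t, k⟩ hx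
    have ht : t < i := Finset.mem_range.1 (Finset.mem_sigma.1 hx).1
    have hk : k < t + 1 := Finset.mem_range.1 (Finset.mem_sigma.1 hx).2
    dsimp only
    simp only [Sigma.mk.inj_iff, heq_eq_eq]
    refine ⟨by omega, ?_⟩
    try rfl
    try trivial
  · rintro ⟨j, k⟩ hx
    have hj1 : 1 ≤ j := (Finset.mem_Icc.1 (Finset.mem_sigma.1 hx).1).1
    have hj2 : j ≤ p - 1 := (Finset.mem_Icc.1 (Finset.mem_sigma.1 hx).1).2
    have hk : k < i + 1 - j := Finset.mem_range.1 (Finset.mem_sigma.1 hx).2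
    dsimp only
    have hc : n.choose (j - 1 + k) * ((j - 1 + k).choose k)
        = n.choose (j - 1) * ((n + 1 - j).choose k) := by
      have h1 : (j - 1 + k).choose k = (j - 1 + k).choose (j - 1) := by
        rw [← Nat.choose_symm (show j - 1 ≤ j - 1 + k by omega)]
        congr 1
        omega
      rw [h1]
      have h2 := Nat.choose_mul (n := n) (k := j - 1 + k) (s := j - 1)
        (by omega)
      rw [Nat.add_sub_cancel_left, show n - (j - 1) = n + 1 - j by omega] at h2
      exact h2
    calc (n.choose (j - 1) : ℤ) * ((n + 1 - j).choose k) * (-2) ^ k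
        = ((n.choose (j - 1) * ((n + 1 - j).choose k) : ℕ) : ℤ) * (-2) ^ k := by
          push_cast; ring
      _ = ((n.choose (j - 1 + k) * ((j - 1 + k).choose k) : ℕ) : ℤ) * (-2) ^ k := by rw [hc]
      _ = (n.choose (j - 1 + k) : ℤ) * ((j - 1 + k).choose k) * (-2) ^ k := by
          push_cast; ring

lemma Asum_value {p i : ℕ} (hodd : Odd p) (hp3 : 3 ≤ p) (h1 : 1 ≤ i) (h2 : i ≤ p - 1) :
    ∑ m ∈ Finset.Icc 1 (i + p),
        (-1 : ℤ) ^ (m - 1) * (Nat.factorial (m - 1)) * stirlingRes (i + p) m (p - 1)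
      = (-1) ^ (i + 1) * (((i + p - 1).choose i : ℕ) : ℤ) := by
  obtain ⟨n, hn⟩ : ∃ n, i + p = n + 1 := ⟨i + p - 1, by omega⟩
  rw [hn, Asum_eq (p - 1) n]
  have hM : ∀ j ∈ Finset.Icc 1 (p - 1), ((n.choose (j - 1) : ℤ)) * Msum (p - 1) (n + 1 - j)
      = (n.choose (j - 1) : ℤ) * ((-1) ^ (n + 1 - j)
        + ∑ k ∈ Finset.range (n + 1 - j + 1 - p), (-2 : ℤ) ^ k * ((n + 1 - j).choose k)) := by
    intro j hj
    obtain ⟨hj1, hj2⟩ := Finset.mem_Icc.1 hj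
    rw [Msum_closed hodd (by omega) (n + 1 - j) (by omega), Fc]
  rw [Finset.sum_congr rfl hM]
  simp only [mul_add]
  rw [Finset.sum_add_distrib]
  have hT1 : ∑ j ∈ Finset.Icc 1 (p - 1), (n.choose (j - 1) : ℤ) * (-1) ^ (n + 1 - j)
      = (-1) ^ (i + 1) * (((n - 1).choose (p - 2) : ℕ) : ℤ) := by
    have hIcc : Finset.Icc 1 (p - 1) = Finset.Ico 1 p := by
      rw [← Finset.Ico_add_one_right_eq_Icc]
      congr 1
      omega
    rw [hIcc, Finset.sum_Ico_eq_sum_range]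
    have e : ∀ k ∈ Finset.range (p - 1), (n.choose (1 + k - 1) : ℤ) * (-1) ^ (n + 1 - (1 + k))
        = (-1) ^ n * ((-1) ^ k * (n.choose k)) := by
      intro k hk
      rw [Finset.mem_range] at hk
      have h3 : 1 + k - 1 = k := by omega
      have hpow : (-1 : ℤ) ^ n * (-1) ^ k = (-1) ^ (n + 1 - (1 + k)) := by
        rw [← pow_add, show n + k = (n + 1 - (1 + k)) + 2 * k by omega, pow_add, pow_mul]
        norm_num
      rw [h3, ← hpow]
      ring
    rw [show p - 1 = p - 1 - 1 + 1 by omega] at e ⊢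
    rw [Finset.sum_congr rfl e, ← Finset.mul_sum, alt_partial0 n (by omega) (p - 1 - 1)]
    have hsign : (-1 : ℤ) ^ n * (-1) ^ (p - 1 - 1) = (-1) ^ (i + 1) := by
      rw [← pow_add, show n + (p - 1 - 1) = (i + 1) + 2 * (p - 2) by omega, pow_add, pow_mul]
      norm_num
    rw [← mul_assoc, hsign, show p - 1 - 1 = p - 2 by omega]
  have hT2 : ∑ j ∈ Finset.Icc 1 (p - 1), (n.choose (j - 1) : ℤ)
        * (∑ k ∈ Finset.range (n + 1 - j + 1 - p), (-2 : ℤ) ^ k * ((n + 1 - j).choose k))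
      = (-1) ^ (i + 1) * (((n - 1).choose (i - 1) : ℕ) : ℤ) := by
    rw [swap_sum2 p n i h1 h2 hn.symm hp3]
    have e : ∀ t ∈ Finset.range i, (n.choose t : ℤ) * (-1) ^ t
        = (-1) ^ t * (n.choose t) := by
      intros; ring
    rw [show i = i - 1 + 1 by omega] at e ⊢
    rw [Finset.sum_congr rfl e, alt_partial0 n (by omega) (i - 1)]
    have hsign : (-1 : ℤ) ^ (i - 1) = (-1) ^ (i + 1) := by
      rw [show i + 1 = (i - 1) + 2 * 1 by omega, pow_add, pow_mul]
      norm_num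
    rw [hsign, show i - 1 + 1 = i by omega]
  rw [hT1, hT2, ← mul_add]
  congr 1
  have hsymm : (n - 1).choose (p - 2) = (n - 1).choose i := by
    rw [← Nat.choose_symm (show i ≤ n - 1 by omega)]
    congr 1
    omega
  have hpascal := Nat.choose_succ_succ' (n - 1) (i - 1)
  rw [show n - 1 + 1 = n by omega, show i - 1 + 1 = i by omega] at hpascal
  rw [hsymm, Nat.add_sub_cancel]
  push_cast [hpascal]
  ring

lemma choose_p_add_modeq {p : ℕ} (hp : p.Prime) (hp3 : 3 ≤ p) :
    ∀ k, k ≤ p - 2 → (p + k).choose k ≡ 1 [MOD p] := by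
  intro k
  induction k with
  | zero => simp [Nat.ModEq.refl]
  | succ k ih =>
    intro hk
    have hdvd : p ∣ (p + k).choose (k + 1) := by
      have h := hp.dvd_choose_add (a := k + 1) (b := p - 1) (by omega) (by omega) (by omega)
      rwa [show k + 1 + (p - 1) = p + k by omega] at h
    have hrec := Nat.choose_succ_succ' (p + k) k
    rw [show p + (k + 1) = p + k + 1 by omega, hrec]
    have h0 : (p + k).choose (k + 1) ≡ 0 [MOD p] := (Nat.modEq_zero_iff_dvd).2 hdvd
    have := (ih (by omega)).add h0
    simpa using this

end F

theorem stmt_16 (p i : ℕ) (hp : p.Prime) (hp3 : 3 ≤ p) (h1 : 1 ≤ i) (h2 : i ≤ p - 1) :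
    (i : ℤ) * ∑ m ∈ Finset.Icc 1 (i + p),
        (-1 : ℤ) ^ (m - 1) * (Nat.factorial (m - 1) : ℤ) * stirlingRes (i + p) m (p - 1) ≡
      (-1) ^ (i + 1) * (p : ℤ) [ZMOD (p : ℤ) ^ 2] := by
  have hodd : Odd p := hp.odd_of_ne_two (by omega)
  rw [Asum_value hodd hp3 h1 h2]
  have hnat : i * ((i + p - 1).choose i) = p * ((i + p - 1).choose (i - 1)) := by
    have h := Nat.choose_succ_right_eq (i + p - 1) (i - 1)
    rw [show i - 1 + 1 = i by omega, show i + p - 1 - (i - 1) = p by omega] at h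
    rw [Nat.mul_comm i _, h, Nat.mul_comm]
  have hh : (i : ℤ) * ((-1) ^ (i + 1) * (((i + p - 1).choose i : ℕ) : ℤ))
      = (-1) ^ (i + 1) * ((p : ℤ) * (((i + p - 1).choose (i - 1) : ℕ) : ℤ)) := by
    calc (i : ℤ) * ((-1) ^ (i + 1) * (((i + p - 1).choose i : ℕ) : ℤ))
        = (-1) ^ (i + 1) * ((i * ((i + p - 1).choose i) : ℕ) : ℤ) := by push_cast; ring
      _ = (-1) ^ (i + 1) * ((p * ((i + p - 1).choose (i - 1)) : ℕ) : ℤ) := by rw [hnat]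
      _ = (-1) ^ (i + 1) * ((p : ℤ) * (((i + p - 1).choose (i - 1) : ℕ) : ℤ)) := by
          push_cast; ring
  rw [hh]
  have hC : (i + p - 1).choose (i - 1) ≡ 1 [MOD p] := by
    have := choose_p_add_modeq hp hp3 (i - 1) (by omega)
    rwa [show p + (i - 1) = i + p - 1 by omega] at this
  apply Int.ModEq.mul_left
  refine Int.modEq_iff_dvd.2 ?_
  have hdvd : (p : ℤ) ∣ 1 - (((i + p - 1).choose (i - 1) : ℕ) : ℤ) := hC.dvd
  obtain ⟨c, hc⟩ := hdvd
  refine ⟨c, ?_⟩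
  have : (p : ℤ) - (p : ℤ) * (((i + p - 1).choose (i - 1) : ℕ) : ℤ)
      = (p : ℤ) * (1 - (((i + p - 1).choose (i - 1) : ℕ) : ℤ)) := by ring
  rw [this, hc]
  ring
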